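/- Let d ≥ 1 be an integer, p ≥ 2, c > 0, and h, r > 0 with h ≤ r/√d. Define weights ω_β = h^d / (c · ω_d · r^{p+d}) for β ∈ ℤ^d with |hβ| < r and ω_β = 0 otherwise, where ω_d is the Lebesgue measure of the unit ball in ℝ^d. Then Σ_{β∈ℤ^d} ω_β ≤ 2^d / (c · r^p). -/

import Mathlib

open MeasureTheory ENNReal

/-- The grid point `y_β = h β ∈ ℝ^d` for `β ∈ ℤ^d`. -/
noncomputable def ygrid (d : ℕ) (h : ℝ) (β : Fin d → ℤ) : EuclideanSpace ℝ (Fin d) :=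
  (WithLp.equiv 2 (Fin d → ℝ)).symm (fun i => h * (β i : ℝ))

/-- The weights of the discretization of Section 5.2 satisfy `Σ_β ω_β ≤ 2^d/(c r^p)`. -/
theorem sum_weights_le (d : ℕ) (hd : 1 ≤ d) (p : ℝ) (hp : 2 ≤ p) (c : ℝ) (hc : 0 < c)
    (h r : ℝ) (hh : 0 < h) (hr : 0 < r) (hhr : h ≤ r / Real.sqrt d)
    (ω : (Fin d → ℤ) → ℝ)
    (hω : ∀ β, ω β = if ‖ygrid d h β‖ < r then
      h ^ d / (c * (volume (Metric.ball (0 : EuclideanSpace ℝ (Fin d)) 1)).toReal *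
        r ^ (p + (d : ℝ))) else 0) :
    ∑ᶠ β, ω β ≤ 2 ^ d / (c * r ^ p) := by
  classical
  haveI : NeZero d := ⟨Nat.one_le_iff_ne_zero.mp hd⟩
  haveI : Nonempty (Fin d) := ⟨⟨0, hd⟩⟩
  have hd0 : (0:ℝ) < d := by exact_mod_cast hd
  have hsd : 0 < Real.sqrt d := Real.sqrt_pos.2 hd0
  have hhd : h * Real.sqrt d ≤ r := by
    rw [div_eq_mul_inv] at hhr
    calc h * Real.sqrt d ≤ (r * (Real.sqrt d)⁻¹) * Real.sqrt d :=
          mul_le_mul_of_nonneg_right hhr hsd.le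
      _ = r := by field_simp
  set W := volume (Metric.ball (0 : EuclideanSpace ℝ (Fin d)) 1) with hW
  have hWpos : 0 < W := Metric.measure_ball_pos _ _ one_pos
  have hWfin : W < ⊤ := measure_ball_lt_top
  set ωd := W.toReal with hωd
  have hωdR : 0 < ωd := ENNReal.toReal_pos hWpos.ne' hWfin.ne
  set M : ℤ := ⌈r / h⌉ with hM
  set B : Finset (Fin d → ℤ) := Finset.Icc (fun _ => -M) (fun _ => M) with hB
  set T : Finset (Fin d → ℤ) := B.filter (fun β => ‖ygrid d h β‖ < r) with hT
  -- coordinatewise bound from norm bound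
  have coord_le : ∀ β : Fin d → ℤ, ∀ i, |h * (β i : ℝ)| ≤ ‖ygrid d h β‖ := by
    intro β i
    rw [EuclideanSpace.norm_eq]
    have hcn : ‖(ygrid d h β) i‖ = |h * (β i : ℝ)| := by simp [ygrid, Real.norm_eq_abs, abs_mul]
    have : |h * (β i : ℝ)| = Real.sqrt (‖(ygrid d h β) i‖ ^ 2) := by
      rw [hcn, Real.sqrt_sq_eq_abs, abs_abs]
    rw [this]
    apply Real.sqrt_le_sqrt
    exact Finset.single_le_sum (f := fun i => ‖(ygrid d h β) i‖ ^ 2)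
      (fun j _ => sq_nonneg _) (Finset.mem_univ i)
  have hsupp : Function.support ω ⊆ (T : Set (Fin d → ℤ)) := by
    intro β hβ
    rw [Function.mem_support, hω β] at hβ
    by_cases hcond : ‖ygrid d h β‖ < r
    · simp only [hT, Finset.coe_filter, Set.mem_setOf_eq]
      refine ⟨?_, hcond⟩
      rw [hB, Finset.mem_Icc]
      constructor <;> intro i <;>
      · have h1 : |h * (β i : ℝ)| < r := lt_of_le_of_lt (coord_le β i) hcond
        have h2 : |(β i : ℝ)| < r / h := by
          rw [lt_div_iff₀ hh]
          rwa [abs_mul, abs_of_pos hh, mul_comm] at h1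
        have h3 : |(β i : ℝ)| ≤ (M : ℝ) := le_trans h2.le (by
          rw [hM]; exact Int.le_ceil _)
        have h4 : |β i| ≤ M := by exact_mod_cast h3
        simp only [abs_le] at h4
        first
        | exact h4.1
        | exact h4.2
    · simp [hcond] at hβ
  rw [finsum_eq_sum_of_support_subset ω hsupp]
  set v : ℝ := h ^ d / (c * ωd * r ^ (p + (d : ℝ))) with hv
  have hsum : ∑ β ∈ T, ω β = T.card * v := by
    rw [Finset.sum_congr rfl (fun β hβ => ?_), Finset.sum_const, nsmul_eq_mul]
    rw [hω β, if_pos (Finset.mem_filter.mp hβ).2]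
  rw [hsum]
  -- measure-theoretic counting bound
  set f := (MeasurableEquiv.toLp 2 (Fin d → ℝ)).symm with hf
  set box : (Fin d → ℤ) → Set (Fin d → ℝ) :=
    fun β => Set.univ.pi (fun i => Set.Ico (h * β i) (h * β i + h)) with hbox
  have box_meas : ∀ β, MeasurableSet (box β) := fun β =>
    MeasurableSet.univ_pi (fun i => measurableSet_Ico)
  have box_vol : ∀ β, volume (box β) = ENNReal.ofReal h ^ d := by
    intro β
    rw [hbox, volume_pi_pi]
    simp [Real.volume_Ico]
  have box_disj : ∀ β γ : Fin d → ℤ, β ≠ γ → Disjoint (box β) (box γ) := by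
    intro β γ hne
    obtain ⟨i, hi⟩ : ∃ i, β i ≠ γ i := by
      by_contra hcon
      push_neg at hcon
      exact hne (funext hcon)
    rw [Set.disjoint_left]
    intro x hx hx'
    have h1 := hx i (Set.mem_univ i)
    have h2 := hx' i (Set.mem_univ i)
    simp only [Set.mem_Ico] at h1 h2
    rcases lt_or_gt_of_ne hi with hlt | hlt
    · have : h * β i + h ≤ h * γ i := by
        have : (β i : ℝ) + 1 ≤ γ i := by exact_mod_cast hlt
        nlinarith
      linarith [h1.2, h2.1]
    · have : h * γ i + h ≤ h * β i := by
        have : (γ i : ℝ) + 1 ≤ β i := by exact_mod_cast hlt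
        nlinarith
      linarith [h1.1, h2.2]
  set cube : (Fin d → ℤ) → Set (EuclideanSpace ℝ (Fin d)) := fun β => f ⁻¹' (box β) with hcube
  have cube_vol : ∀ β, volume (cube β) = ENNReal.ofReal h ^ d := by
    intro β
    rw [hcube]
    rw [(EuclideanSpace.volume_preserving_symm_measurableEquiv_toLp (Fin d)).measure_preimage
      (box_meas β).nullMeasurableSet]
    exact box_vol β
  have cube_sub : ∀ β ∈ T, cube β ⊆ Metric.ball (0 : EuclideanSpace ℝ (Fin d)) (2 * r) := by
    intro β hβ x hx
    have hβr : ‖ygrid d h β‖ < r := (Finset.mem_filter.mp hβ).2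
    have hxi : ∀ i, h * β i ≤ x i ∧ x i < h * β i + h := by
      intro i
      have := hx i (Set.mem_univ i)
      simpa [hcube, hf, MeasurableEquiv.coe_toLp_symm] using this
    have hdiff : ‖x - ygrid d h β‖ ≤ h * Real.sqrt d := by
      rw [EuclideanSpace.norm_eq]
      have key : ∑ i, ‖(x - ygrid d h β) i‖ ^ 2 ≤ (d : ℝ) * h ^ 2 := by
        calc ∑ i, ‖(x - ygrid d h β) i‖ ^ 2 ≤ ∑ _i : Fin d, h ^ 2 := by
              apply Finset.sum_le_sum
              intro i _
              have hxi' := hxi i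
              have hval : (x - ygrid d h β) i = x i - h * β i := by
                simp [ygrid]
              rw [hval, Real.norm_eq_abs, sq_abs]
              nlinarith [hxi'.1, hxi'.2]
          _ = (d : ℝ) * h ^ 2 := by simp [Finset.sum_const, nsmul_eq_mul]
      calc Real.sqrt (∑ i, ‖(x - ygrid d h β) i‖ ^ 2) ≤ Real.sqrt ((d : ℝ) * h ^ 2) :=
            Real.sqrt_le_sqrt key
        _ = h * Real.sqrt d := by
            rw [Real.sqrt_mul hd0.le, Real.sqrt_sq hh.le]; ring
    rw [Metric.mem_ball, dist_zero_right]
    calc ‖x‖ = ‖(x - ygrid d h β) + ygrid d h β‖ := by rw [sub_add_cancel]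
      _ ≤ ‖x - ygrid d h β‖ + ‖ygrid d h β‖ := norm_add_le _ _
      _ < h * Real.sqrt d + r := by linarith
      _ ≤ 2 * r := by linarith
  -- counting bound
  have count_bound : (T.card : ℝ≥0∞) * ENNReal.ofReal h ^ d ≤ ENNReal.ofReal ((2*r) ^ d) * W := by
    have hdisj : (T : Set (Fin d → ℤ)).PairwiseDisjoint cube := by
      intro β _ γ _ hne
      exact (box_disj β γ hne).preimage f
    have hmeas : ∀ β ∈ T, MeasurableSet (cube β) := fun β _ =>
      f.measurable (box_meas β)
    calc (T.card : ℝ≥0∞) * ENNReal.ofReal h ^ d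
        = ∑ β ∈ T, volume (cube β) := by
          rw [Finset.sum_congr rfl (fun β _ => cube_vol β), Finset.sum_const, nsmul_eq_mul]
      _ = volume (⋃ β ∈ T, cube β) := (measure_biUnion_finset hdisj hmeas).symm
      _ ≤ volume (Metric.ball (0 : EuclideanSpace ℝ (Fin d)) (2 * r)) := by
          apply measure_mono
          exact Set.iUnion₂_subset cube_sub
      _ = ENNReal.ofReal ((2*r) ^ d) * W := by
          haveI : Nontrivial (EuclideanSpace ℝ (Fin d)) := inferInstance
          rw [Measure.addHaar_ball _ _ (by positivity : (0:ℝ) ≤ 2*r)]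
          rw [finrank_euclideanSpace_fin]
  -- to reals
  have count_real : (T.card : ℝ) * h ^ d ≤ (2*r) ^ d * ωd := by
    have h1 : ((T.card : ℝ≥0∞) * ENNReal.ofReal h ^ d).toReal = (T.card : ℝ) * h ^ d := by
      rw [ENNReal.toReal_mul, ENNReal.toReal_pow, ENNReal.toReal_natCast,
        ENNReal.toReal_ofReal hh.le]
    have h2 : (ENNReal.ofReal ((2*r) ^ d) * W).toReal = (2*r) ^ d * ωd := by
      rw [ENNReal.toReal_mul, ENNReal.toReal_ofReal (by positivity)]
    rw [← h1, ← h2]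
    apply ENNReal.toReal_mono
    · exact ENNReal.mul_ne_top ENNReal.ofReal_ne_top hWfin.ne
    · exact count_bound
  -- final algebra
  have hrpd : r ^ (p + (d : ℝ)) = r ^ p * r ^ d := by
    rw [Real.rpow_add hr, Real.rpow_natCast]
  have hrp : (0:ℝ) < r ^ p := Real.rpow_pos_of_pos hr p
  have hden : (0:ℝ) < c * ωd * r ^ (p + (d : ℝ)) := by
    rw [hrpd]; positivity
  calc (T.card : ℝ) * v = ((T.card : ℝ) * h ^ d) / (c * ωd * r ^ (p + (d : ℝ))) := by
        rw [hv]; ring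
    _ ≤ ((2*r) ^ d * ωd) / (c * ωd * r ^ (p + (d : ℝ))) := by
        gcongr
    _ = 2 ^ d / (c * r ^ p) := by
        rw [hrpd, mul_pow]
        field_simp
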